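/- Let T, K ≥ 1 be integers and let η_1 ≥ η_2 ≥ … ≥ η_{T+1} > 0 be a nonincreasing sequence of positive learning rates. Let z : {1,…,T} → {1,…,K} → ℝ satisfy z_t(i) ≥ 0 for all t and i. Define w_t(i) := (1/K)·exp(−η_t·Σ_{s=1}^{t−1} z_s(i)), W_t := Σ_{i=1}^K w_t(i), and π_t(i) := w_t(i)/W_t. Then for every fixed action j ∈ {1,…,K}: Σ_{t=1}^T Σ_{i=1}^K π_t(i)·z_t(i) − Σ_{t=1}^T z_t(j) ≤ (log K)/η_{T+1} + Σ_{t=1}^T (η_t/2)·Σ_{i=1}^K π_t(i)·z_t(i)². -/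

import Mathlib

open Finset

/-- Exponential weights with time-varying learning rates:
`wIX T K η z t i = (1/K) * exp (-η_t ∑_{s < t} z s i)`. -/
noncomputable def wIX (T K : ℕ) (η : Fin (T + 1) → ℝ) (z : Fin T → Fin K → ℝ)
    (t : Fin T) (i : Fin K) : ℝ :=
  (1 / K) * Real.exp (-(η t.castSucc) *
    ∑ s ∈ univ.filter (fun s : Fin T => (s : ℕ) < (t : ℕ)), z s i)


noncomputable def Lcum (T K : ℕ) (z : Fin T → Fin K → ℝ) (n : ℕ) (i : Fin K) : ℝ :=
  ∑ s ∈ univ.filter (fun s : Fin T => (s : ℕ) < n), z s i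

noncomputable def Gfun (T K : ℕ) (z : Fin T → Fin K → ℝ) (a : ℝ) (n : ℕ) : ℝ :=
  ∑ i, (1 / K : ℝ) * Real.exp (-a * Lcum T K z n i)

lemma exp_neg_le_quad {x : ℝ} (hx : 0 ≤ x) :
    Real.exp (-x) ≤ 1 - x + x ^ 2 / 2 := by
  have h := Real.quadratic_le_exp_of_nonneg hx
  have hpos : (0:ℝ) < 1 + x + x ^ 2 / 2 := by nlinarith
  rw [Real.exp_neg]
  have h1 : (Real.exp x)⁻¹ ≤ (1 + x + x ^ 2 / 2)⁻¹ := by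
    apply inv_anti₀ hpos h
  refine h1.trans ?_
  rw [inv_le_iff_one_le_mul₀ hpos]
  nlinarith

lemma Lcum_nonneg (T K : ℕ) (z : Fin T → Fin K → ℝ) (hz : ∀ t i, 0 ≤ z t i)
    (n : ℕ) (i : Fin K) : 0 ≤ Lcum T K z n i :=
  Finset.sum_nonneg fun s _ => hz s i

lemma Lcum_zero (T K : ℕ) (z : Fin T → Fin K → ℝ) (i : Fin K) :
    Lcum T K z 0 i = 0 := by
  simp [Lcum]

lemma Lcum_succ (T K : ℕ) (z : Fin T → Fin K → ℝ) (t : Fin T) (i : Fin K) :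
    Lcum T K z ((t : ℕ) + 1) i = Lcum T K z (t : ℕ) i + z t i := by
  unfold Lcum
  have hset : univ.filter (fun s : Fin T => (s : ℕ) < (t : ℕ) + 1)
      = insert t (univ.filter (fun s : Fin T => (s : ℕ) < (t : ℕ))) := by
    ext s
    simp [Nat.lt_succ_iff_lt_or_eq, Fin.ext_iff]; rw [Fin.le_def, Fin.lt_def]; omega
  rw [hset, Finset.sum_insert (by simp)]
  ring

lemma Gfun_pos (T K : ℕ) (hK : 1 ≤ K) (z : Fin T → Fin K → ℝ) (a : ℝ) (n : ℕ) :
    0 < Gfun T K z a n := by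
  have : Nonempty (Fin K) := ⟨⟨0, hK⟩⟩
  apply Finset.sum_pos (fun i _ => by positivity) univ_nonempty

lemma Gfun_zero (T K : ℕ) (hK : 1 ≤ K) (z : Fin T → Fin K → ℝ) (a : ℝ) :
    Gfun T K z a 0 = 1 := by
  have hK0 : (K : ℝ) ≠ 0 := by positivity
  simp [Gfun, Lcum_zero, Finset.sum_const, card_univ]
  field_simp

lemma jensen_step (T K : ℕ) (hK : 1 ≤ K) (z : Fin T → Fin K → ℝ)
    {a b : ℝ} (hb : 0 < b) (hba : b ≤ a) (n : ℕ) :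
    (1 / b) * Real.log (Gfun T K z b n) ≤ (1 / a) * Real.log (Gfun T K z a n) := by
  have ha : 0 < a := hb.trans_le hba
  have hp : 1 ≤ a / b := (one_le_div hb).2 hba
  have hw' : ∑ _i : Fin K, (1 / K : ℝ) = 1 := by
    have hK0 : (K : ℝ) ≠ 0 := by
      simp only [ne_eq, Nat.cast_eq_zero]; omega
    simp [Finset.sum_const, card_univ]
    field_simp
  have key := Real.arith_mean_le_rpow_mean univ (fun _ : Fin K => (1 / K : ℝ))
    (fun i => Real.exp (-b * Lcum T K z n i)) (fun i _ => by positivity) hw'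
    (fun i _ => (Real.exp_pos _).le) hp
  have hpow : ∀ i : Fin K, Real.exp (-b * Lcum T K z n i) ^ (a / b) =
      Real.exp (-a * Lcum T K z n i) := by
    intro i
    rw [← Real.exp_mul]
    congr 1
    field_simp
  have key2 : Gfun T K z b n ≤ Gfun T K z a n ^ (b / a) := by
    have h1 : (1 : ℝ) / (a / b) = b / a := by field_simp
    calc Gfun T K z b n
        ≤ (∑ i, (1/K:ℝ) * Real.exp (-b * Lcum T K z n i) ^ (a/b)) ^ (1/(a/b)) := key
      _ = Gfun T K z a n ^ (b / a) := by
          rw [h1]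
          congr 1
          exact Finset.sum_congr rfl fun i _ => by rw [hpow i]
  have h3 := Real.log_le_log (Gfun_pos T K hK z b n) key2
  rw [Real.log_rpow (Gfun_pos T K hK z a n)] at h3
  have h4 := mul_le_mul_of_nonneg_left h3 (le_of_lt (one_div_pos.2 hb))
  calc (1/b) * Real.log (Gfun T K z b n)
      ≤ (1/b) * (b/a * Real.log (Gfun T K z a n)) := h4
    _ = (1/a) * Real.log (Gfun T K z a n) := by
        field_simp

lemma per_round (T K : ℕ) (hK : 1 ≤ K) (η : Fin (T+1) → ℝ) (hηpos : ∀ t, 0 < η t)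
    (z : Fin T → Fin K → ℝ) (hz : ∀ t i, 0 ≤ z t i)
    (W : Fin T → ℝ) (hW : ∀ t, W t = ∑ i, wIX T K η z t i)
    (π : Fin T → Fin K → ℝ) (hπ : ∀ t i, π t i = wIX T K η z t i / W t)
    (t : Fin T) :
    (1 / η t.castSucc) * Real.log (Gfun T K z (η t.castSucc) ((t:ℕ)+1))
      - (1 / η t.castSucc) * Real.log (Gfun T K z (η t.castSucc) (t:ℕ))
    ≤ -(∑ i, π t i * z t i) + (η t.castSucc / 2) * ∑ i, π t i * z t i ^ 2 := by
  set a := η t.castSucc with ha_def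
  have ha : 0 < a := hηpos _
  have hK0 : (0:ℝ) < K := by exact_mod_cast hK
  have hWG : W t = Gfun T K z a (t:ℕ) := by
    rw [hW]; rfl
  have hWpos : 0 < W t := hWG ▸ Gfun_pos T K hK z a (t:ℕ)
  have hwpos : ∀ i, 0 < wIX T K η z t i := fun i =>
    mul_pos (by positivity) (Real.exp_pos _)
  have hπpos : ∀ i, 0 < π t i := fun i => by
    rw [hπ]; exact div_pos (hwpos i) hWpos
  have hπsum : ∑ i, π t i = 1 := by
    rw [Finset.sum_congr rfl (fun i _ => hπ t i), ← Finset.sum_div, ← hW,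
      div_self hWpos.ne']
  set S := ∑ i, π t i * Real.exp (-a * z t i) with hS_def
  have hne : Nonempty (Fin K) := ⟨⟨0, hK⟩⟩
  have hSpos : 0 < S :=
    Finset.sum_pos (fun i _ => mul_pos (hπpos i) (Real.exp_pos _)) univ_nonempty
  have hGsucc : Gfun T K z a ((t:ℕ)+1) = W t * S := by
    have h1 : Gfun T K z a ((t:ℕ)+1)
        = ∑ i, wIX T K η z t i * Real.exp (-a * z t i) := by
      unfold Gfun wIX
      refine Finset.sum_congr rfl fun i _ => ?_
      rw [Lcum_succ, show -a * (Lcum T K z (t:ℕ) i + z t i)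
        = (-a * Lcum T K z (t:ℕ) i) + (-a * z t i) by ring, Real.exp_add]
      rw [← ha_def]
      unfold Lcum
      ring
    rw [h1, Finset.mul_sum]
    refine Finset.sum_congr rfl fun i _ => ?_
    rw [hπ]
    field_simp
  have hlog : Real.log (Gfun T K z a ((t:ℕ)+1))
      = Real.log (Gfun T K z a (t:ℕ)) + Real.log S := by
    rw [hGsucc, Real.log_mul hWpos.ne' hSpos.ne', hWG]
  have hS_le : S ≤ 1 - a * (∑ i, π t i * z t i) + (a^2/2) * (∑ i, π t i * z t i ^ 2) := by
    have hterm : ∀ i : Fin K, π t i * Real.exp (-a * z t i)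
        ≤ π t i * (1 - a * z t i + (a * z t i)^2/2) := fun i => by
      refine mul_le_mul_of_nonneg_left ?_ (hπpos i).le
      rw [show -a * z t i = -(a * z t i) by ring]
      exact exp_neg_le_quad (mul_nonneg ha.le (hz t i))
    have heq : ∑ i, π t i * (1 - a * z t i + (a * z t i)^2/2)
        = (∑ i, π t i) - a * (∑ i, π t i * z t i) + (a^2/2) * (∑ i, π t i * z t i ^ 2) := by
      rw [Finset.mul_sum, Finset.mul_sum, ← Finset.sum_sub_distrib, ← Finset.sum_add_distrib]
      exact Finset.sum_congr rfl fun i _ => by ring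
    calc S ≤ ∑ i, π t i * (1 - a * z t i + (a * z t i)^2/2) :=
          Finset.sum_le_sum fun i _ => hterm i
      _ = 1 - a * (∑ i, π t i * z t i) + (a^2/2) * (∑ i, π t i * z t i ^ 2) := by
          rw [heq, hπsum]
  have hlogS : Real.log S ≤ S - 1 := Real.log_le_sub_one_of_pos hSpos
  have hfinal : (1/a) * Real.log S
      ≤ -(∑ i, π t i * z t i) + (a / 2) * ∑ i, π t i * z t i ^ 2 := by
    have h5 : Real.log S ≤ - a * (∑ i, π t i * z t i) + (a^2/2) * (∑ i, π t i * z t i ^ 2) := by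
      linarith
    have h6 := mul_le_mul_of_nonneg_left h5 (le_of_lt (one_div_pos.2 ha))
    calc (1/a) * Real.log S
        ≤ (1/a) * (- a * (∑ i, π t i * z t i) + (a^2/2) * (∑ i, π t i * z t i ^ 2)) := h6
      _ = -(∑ i, π t i * z t i) + (a / 2) * ∑ i, π t i * z t i ^ 2 := by
          field_simp
  rw [hlog]
  linarith

theorem stmt13 (T K : ℕ) (hT : 1 ≤ T) (hK : 1 ≤ K)
    (η : Fin (T + 1) → ℝ) (hηpos : ∀ t, 0 < η t)
    (hηmono : ∀ s t : Fin (T + 1), s ≤ t → η t ≤ η s)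
    (z : Fin T → Fin K → ℝ) (hz : ∀ t i, 0 ≤ z t i) (j : Fin K)
    (W : Fin T → ℝ) (hW : ∀ t, W t = ∑ i, wIX T K η z t i)
    (π : Fin T → Fin K → ℝ) (hπ : ∀ t i, π t i = wIX T K η z t i / W t) :
    (∑ t, ∑ i, π t i * z t i) - ∑ t, z t j
      ≤ Real.log K / η (Fin.last T)
          + ∑ t, (η t.castSucc / 2) * ∑ i, π t i * z t i ^ 2 := by
  have hK0 : (0:ℝ) < K := by exact_mod_cast hK
  have hηl := hηpos (Fin.last T)
  set ηn : ℕ → ℝ := fun n => η ⟨min n T, by omega⟩ with hηn_def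
  set F : ℕ → ℝ := fun n => (1 / ηn n) * Real.log (Gfun T K z (ηn n) n) with hF_def
  have hηn_pos : ∀ n, 0 < ηn n := fun n => hηpos _
  have hηcast : ∀ t : Fin T, ηn (t:ℕ) = η t.castSucc := by
    intro t
    simp only [hηn_def]
    congr 1
    exact Fin.ext (by simp [Nat.min_eq_left (le_of_lt t.isLt)])
  have hηlast : ηn T = η (Fin.last T) := by
    simp only [hηn_def]
    congr 1
    exact Fin.ext (by simp [Fin.last])
  have hηmono' : ∀ t : Fin T, ηn ((t:ℕ)+1) ≤ ηn (t:ℕ) := by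
    intro t
    apply hηmono
    rw [Fin.le_def]
    simp only []
    omega
  have hstep : ∀ t : Fin T, F ((t:ℕ)+1) - F (t:ℕ)
      ≤ -(∑ i, π t i * z t i) + (η t.castSucc / 2) * ∑ i, π t i * z t i ^ 2 := by
    intro t
    have hb := hηn_pos ((t:ℕ)+1)
    have hba : ηn ((t:ℕ)+1) ≤ η t.castSucc := by
      rw [← hηcast t]; exact hηmono' t
    have hJ : F ((t:ℕ)+1)
        ≤ (1 / η t.castSucc) * Real.log (Gfun T K z (η t.castSucc) ((t:ℕ)+1)) :=
      jensen_step T K hK z hb hba ((t:ℕ)+1)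
    have hP := per_round T K hK η hηpos z hz W hW π hπ t
    have hFt : F (t:ℕ)
        = (1 / η t.castSucc) * Real.log (Gfun T K z (η t.castSucc) (t:ℕ)) := by
      simp only [hF_def, hηcast t]
    rw [hFt]
    linarith
  have hF0 : F 0 = 0 := by
    simp [hF_def, Gfun_zero T K hK]
  have hFT : -(Real.log K / η (Fin.last T)) - (∑ t, z t j) ≤ F T := by
    have hLj : Lcum T K z T j = ∑ t, z t j := by
      unfold Lcum
      rw [Finset.filter_true_of_mem (fun s _ => s.isLt)]
    have hone : (1/K:ℝ) * Real.exp (-(η (Fin.last T)) * Lcum T K z T j)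
        ≤ Gfun T K z (η (Fin.last T)) T :=
      Finset.single_le_sum
        (f := fun i => (1/K:ℝ) * Real.exp (-(η (Fin.last T)) * Lcum T K z T i))
        (fun i _ => by positivity) (mem_univ j)
    have hlogged := Real.log_le_log (by positivity) hone
    rw [Real.log_mul (by positivity) (Real.exp_pos _).ne', Real.log_exp,
      one_div, Real.log_inv] at hlogged
    have h2 := mul_le_mul_of_nonneg_left hlogged
      (le_of_lt (one_div_pos.2 hηl))
    have hFTval : F T = (1 / η (Fin.last T))
        * Real.log (Gfun T K z (η (Fin.last T)) T) := by
      simp only [hF_def, hηlast]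
    rw [hFTval, ← hLj]
    calc -(Real.log K / η (Fin.last T)) - Lcum T K z T j
        = (1 / η (Fin.last T))
            * (-Real.log K + -(η (Fin.last T)) * Lcum T K z T j) := by
          field_simp
          ring
      _ ≤ _ := h2
  set B : ℕ → ℝ := fun n => if h : n < T then
      (-(∑ i, π ⟨n, h⟩ i * z ⟨n, h⟩ i)
        + (η (Fin.castSucc ⟨n, h⟩) / 2) * ∑ i, π ⟨n, h⟩ i * z ⟨n, h⟩ i ^ 2)
    else 0 with hB_def
  have htel : F T - F 0 = ∑ n ∈ Finset.range T, (F (n+1) - F n) :=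
    (Finset.sum_range_sub F T).symm
  have hsumB : ∑ n ∈ Finset.range T, (F (n+1) - F n) ≤ ∑ n ∈ Finset.range T, B n := by
    apply Finset.sum_le_sum
    intro n hn
    have hnT : n < T := Finset.mem_range.1 hn
    have := hstep ⟨n, hnT⟩
    simpa [hB_def, dif_pos hnT] using this
  have hBsum : ∑ n ∈ Finset.range T, B n
      = -(∑ t, ∑ i, π t i * z t i)
        + ∑ t, (η t.castSucc / 2) * ∑ i, π t i * z t i ^ 2 := by
    rw [← Fin.sum_univ_eq_sum_range B T]
    have hBt : ∀ t : Fin T, B (t:ℕ)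
        = -(∑ i, π t i * z t i) + (η t.castSucc / 2) * ∑ i, π t i * z t i ^ 2 := by
      intro t
      simp only [hB_def, dif_pos t.isLt, Fin.eta]
    rw [Finset.sum_congr rfl (fun t _ => hBt t), Finset.sum_add_distrib]
    simp [Finset.sum_neg_distrib]
  linarith
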